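/- If R > 0, δ > 0 and the step sizes are ρ_t = δ/(R√t), then for every t ≥ 1 the averaged iterates x̄_t = (1/t) Σ_{u=0}^{t−1} x_u and ȳ_t = (1/t) Σ_{u=0}^{t−1} y_u satisfy gap(x̄_t, ȳ_t) = f(A x̄_t) + σ(−Aᵀ ȳ_t) + f*(ȳ_t) ≤ 2Rδ/√t. -/

import Mathlib

open scoped RealInnerProductSpace
open Finset

noncomputable section
set_option maxHeartbeats 1000000

/-- `y` is a subgradient of `f` at `z`. -/
def IsSubgrad {n : ℕ} (f : EuclideanSpace ℝ (Fin n) → ℝ)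
    (z y : EuclideanSpace ℝ (Fin n)) : Prop :=
  ∀ z', f z + ⟪y, z' - z⟫ ≤ f z'

/-- Bregman divergence of a differentiable function `h` with gradient `h'`. -/
def Dbreg {p : ℕ} (h : EuclideanSpace ℝ (Fin p) → ℝ)
    (h' : EuclideanSpace ℝ (Fin p) → EuclideanSpace ℝ (Fin p))
    (x₁ x₂ : EuclideanSpace ℝ (Fin p)) : ℝ :=
  h x₁ - h x₂ - ⟪x₁ - x₂, h' x₂⟫

/-- Fenchel conjugate of `f`, with values in `EReal`. -/
def fstarE {n : ℕ} (f : EuclideanSpace ℝ (Fin n) → ℝ)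
    (y : EuclideanSpace ℝ (Fin n)) : EReal :=
  ⨆ z, ((⟪y, z⟫ - f z : ℝ) : EReal)

open Filter
variable {p : ℕ}
local notation "E" => EuclideanSpace ℝ (Fin p)

lemma dirDeriv (h : E → ℝ) (h' : E → E) (hdiff : ∀ x, HasGradientAt h (h' x) x) (a d : E) :
    Tendsto (fun θ : ℝ => (h (a + θ • d) - h a) / θ) (nhdsWithin 0 (Set.Ioi 0))
      (nhds ⟪h' a, d⟫) := by
  have hc : HasDerivAt (fun θ : ℝ => a + θ • d) d 0 := by
    simpa using ((hasDerivAt_id (0:ℝ)).smul_const d).const_add a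
  have hF : HasDerivAt (fun θ : ℝ => h (a + θ • d)) ⟪h' a, d⟫ 0 := by
    have := ((by simpa using (hdiff a).hasFDerivAt : HasFDerivAt h ((InnerProductSpace.toDual ℝ E) (h' a)) (a + (0:ℝ) • d)).comp_hasDerivAt (x := (0:ℝ)) hc)
    simp at this; exact this
  have := hasDerivAt_iff_tendsto_slope.mp hF
  have h2 : Tendsto (slope (fun θ : ℝ => h (a + θ • d)) 0) (nhdsWithin 0 (Set.Ioi 0))
      (nhds ⟪h' a, d⟫) := this.mono_left (nhdsWithin_mono _ (fun θ hθ => ne_of_gt hθ))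
  refine h2.congr' ?_
  filter_upwards [self_mem_nhdsWithin] with θ hθ
  simp [slope_def_field]

lemma convex_grad_ineq (g : E → ℝ) (hconv : ConvexOn ℝ Set.univ g) (a z : E) (L : ℝ)
    (hlim : Tendsto (fun θ : ℝ => (g (a + θ • (z - a)) - g a) / θ) (nhdsWithin 0 (Set.Ioi 0))
      (nhds L)) : g a + L ≤ g z := by
  have key : ∀ᶠ θ : ℝ in nhdsWithin 0 (Set.Ioi 0),
      (g (a + θ • (z - a)) - g a) / θ ≤ g z - g a := by
    filter_upwards [Ioc_mem_nhdsGT (zero_lt_one)] with θ hθ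
    have hθ0 : 0 < θ := hθ.1
    have harg : a + θ • (z - a) = (1 - θ) • a + θ • z := by module
    have hcomb := hconv.2 (Set.mem_univ a) (Set.mem_univ z)
      (by linarith [hθ.2] : (0:ℝ) ≤ 1 - θ) hθ0.le (by ring)
    rw [← harg] at hcomb
    simp only [smul_eq_mul] at hcomb
    rw [div_le_iff₀ hθ0]
    nlinarith
  have := le_of_tendsto hlim key
  linarith

lemma strong_lower (h : E → ℝ) (h' : E → E) (hdiff : ∀ x, HasGradientAt h (h' x) x)
    (hsc : StrongConvexOn Set.univ 1 h) (x₁ x₂ : E) :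
    (1/2) * ‖x₁ - x₂‖^2 ≤ h x₁ - h x₂ - ⟪x₁ - x₂, h' x₂⟫ := by
  set g : E → ℝ := fun z => h z - 1 / (2:ℝ) * ‖z‖^2 with hg
  have hconv : ConvexOn ℝ Set.univ g :=
    (strongConvexOn_iff_convex (f := h) (m := 1) (s := Set.univ)).mp hsc
  set d := x₁ - x₂ with hd
  have hnormθ : ∀ θ : ℝ, ‖x₂ + θ • d‖^2 = ‖x₂‖^2 + 2 * (θ * ⟪x₂, d⟫) + θ^2 * ‖d‖^2 := by
    intro θ
    rw [norm_add_sq_real, real_inner_smul_right, norm_smul]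
    simp [mul_pow, sq_abs]
  have hlim : Tendsto (fun θ : ℝ => (g (x₂ + θ • d) - g x₂) / θ) (nhdsWithin 0 (Set.Ioi 0))
      (nhds (⟪h' x₂, d⟫ - ⟪x₂, d⟫)) := by
    have h1 := dirDeriv h h' hdiff x₂ d
    have h2 : Tendsto (fun θ : ℝ => -⟪x₂, d⟫ - θ * (‖d‖^2/2)) (nhdsWithin 0 (Set.Ioi 0))
        (nhds (-⟪x₂, d⟫ - 0 * (‖d‖^2/2))) := by
      apply Tendsto.const_sub
      exact (tendsto_id.mul_const _).mono_left nhdsWithin_le_nhds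
    have h3 := h1.add h2
    refine (h3.congr' ?_).mono_right (by norm_num; rw [sub_eq_add_neg])
    filter_upwards [self_mem_nhdsWithin] with θ hθ
    have hθ0 : (θ:ℝ) ≠ 0 := ne_of_gt hθ
    have hgexp : g (x₂ + θ • d) - g x₂
        = (h (x₂ + θ • d) - h x₂) - θ * ⟪x₂, d⟫ - θ^2 * (‖d‖^2/2) := by
      simp only [hg]
      rw [hnormθ θ]
      ring
    rw [hgexp]
    field_simp
    ring
  have hkey := convex_grad_ineq g hconv x₂ x₁ _ (hd ▸ hlim)
  have hnorm : ‖x₁‖^2 = ‖x₂‖^2 + 2 * ⟪x₂, d⟫ + ‖d‖^2 := by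
    have hx1 : x₁ = x₂ + d := by rw [hd]; abel
    rw [hx1, norm_add_sq_real]
  have hsymm : ⟪d, h' x₂⟫ = ⟪h' x₂, d⟫ := real_inner_comm _ _
  simp only [hg] at hkey
  rw [hsymm]
  nlinarith [hkey, hnorm]

lemma first_order (h : E → ℝ) (h' : E → E) (hdiff : ∀ x, HasGradientAt h (h' x) x)
    {K : Set E} (hK : Convex ℝ K) (c : ℝ) (w : E) (xs : E) (hxs : xs ∈ K)
    (hmin : ∀ z ∈ K, c * h xs + ⟪xs, w⟫ ≤ c * h z + ⟪z, w⟫)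
    (z : E) (hz : z ∈ K) : 0 ≤ c * ⟪h' xs, z - xs⟫ + ⟪z - xs, w⟫ := by
  set d := z - xs with hd
  have key : ∀ᶠ θ : ℝ in nhdsWithin 0 (Set.Ioi 0),
      0 ≤ c * ((h (xs + θ • d) - h xs) / θ) + ⟪d, w⟫ := by
    filter_upwards [Ioc_mem_nhdsGT (zero_lt_one)] with θ hθ
    have hθ0 : 0 < θ := hθ.1
    have hmem : xs + θ • d ∈ K := by
      have harg : xs + θ • d = (1 - θ) • xs + θ • z := by rw [hd]; module
      rw [harg]
      exact hK hxs hz (by linarith [hθ.2]) hθ0.le (by ring)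
    have hm := hmin _ hmem
    have hinner : ⟪xs + θ • d, w⟫ = ⟪xs, w⟫ + θ * ⟪d, w⟫ := by
      rw [inner_add_left, real_inner_smul_left]
    rw [hinner] at hm
    have hform : c * ((h (xs + θ • d) - h xs) / θ) + ⟪d, w⟫
        = (c * (h (xs + θ • d)) + (⟪xs, w⟫ + θ * ⟪d, w⟫) - (c * h xs + ⟪xs, w⟫)) / θ := by
      field_simp
      ring
    rw [hform]
    apply div_nonneg _ hθ0.le
    linarith
  have hlim : Tendsto (fun θ : ℝ => c * ((h (xs + θ • d) - h xs) / θ) + ⟪d, w⟫)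
      (nhdsWithin 0 (Set.Ioi 0)) (nhds (c * ⟪h' xs, d⟫ + ⟪d, w⟫)) :=
    ((dirDeriv h h' hdiff xs d).const_mul c).add_const _
  exact ge_of_tendsto hlim key

lemma step_bound (h : E → ℝ) (h' : E → E) (hdiff : ∀ x, HasGradientAt h (h' x) x)
    (hsc : StrongConvexOn Set.univ 1 h) {K : Set E} (hK : Convex ℝ K)
    (ρ R : ℝ) (hρ : 0 < ρ) (prev cur : E) (hcur : cur ∈ K)
    (g : E) (hg : ‖g‖ ≤ R)
    (hmin : ∀ z ∈ K, 1 / ρ * Dbreg h h' cur prev + ⟪cur - prev, g⟫ ≤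
      1 / ρ * Dbreg h h' z prev + ⟪z - prev, g⟫)
    (z : E) (hz : z ∈ K) :
    ⟪g, prev - z⟫ ≤ ρ * R ^ 2 / 2 + 1 / ρ * (Dbreg h h' z prev - Dbreg h h' z cur) := by
  set c := 1 / ρ with hc
  have hc0 : 0 < c := by rw [hc]; positivity
  set w := g - c • h' prev with hw
  have key : ∀ v : E, 1 / ρ * Dbreg h h' v prev + ⟪v - prev, g⟫
      = c * h v + ⟪v, w⟫ + (- (c * h prev) + c * ⟪prev, h' prev⟫ - ⟪prev, g⟫) := by
    intro v
    simp only [Dbreg, hw, hc]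
    rw [inner_sub_left, inner_sub_left, inner_sub_right, real_inner_smul_right]
    ring
  have hmin' : ∀ v ∈ K, c * h cur + ⟪cur, w⟫ ≤ c * h v + ⟪v, w⟫ := by
    intro v hv
    have := hmin v hv
    rw [key cur, key v] at this
    linarith
  have hfo := first_order h h' hdiff hK c w cur hcur hmin' z hz
  have hsplit : ⟪z - cur, w⟫ = ⟪z - cur, g⟫ - c * ⟪z - cur, h' prev⟫ := by
    rw [hw, inner_sub_right, real_inner_smul_right]
  have h3 : ⟪h' cur, z - cur⟫ - ⟪z - cur, h' prev⟫
      = Dbreg h h' z prev - Dbreg h h' z cur - Dbreg h h' cur prev := by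
    simp only [Dbreg]
    simp only [inner_sub_left, inner_sub_right]
    linarith [real_inner_comm (h' cur) z, real_inner_comm (h' cur) cur]
  have hfo3 : 0 ≤ c * ⟪h' cur, z - cur⟫ - c * ⟪z - cur, h' prev⟫ + ⟪z - cur, g⟫ := by
    rw [hsplit] at hfo
    linarith
  have e3 : c * ⟪h' cur, z - cur⟫ - c * ⟪z - cur, h' prev⟫
      = c * Dbreg h h' z prev - c * Dbreg h h' z cur - c * Dbreg h h' cur prev := by
    rw [← mul_sub, h3]
    ring
  have hfo4 : ⟪cur - z, g⟫ ≤ c * Dbreg h h' z prev - c * Dbreg h h' z cur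
      - c * Dbreg h h' cur prev := by
    have hneg : ⟪cur - z, g⟫ = - ⟪z - cur, g⟫ := by
      rw [inner_sub_left, inner_sub_left]; ring
    linarith [hfo3, e3]
  have hsl : (1/2) * ‖cur - prev‖^2 ≤ Dbreg h h' cur prev := by
    simpa [Dbreg] using strong_lower h h' hdiff hsc cur prev
  set a := ‖cur - prev‖ with ha
  have ha0 : 0 ≤ a := norm_nonneg _
  have hR0 : 0 ≤ R := le_trans (norm_nonneg g) hg
  have hcs : ⟪g, prev - cur⟫ ≤ R * a := by
    calc ⟪g, prev - cur⟫ ≤ ‖g‖ * ‖prev - cur‖ := real_inner_le_norm _ _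
    _ = ‖g‖ * a := by rw [ha, norm_sub_rev]
    _ ≤ R * a := mul_le_mul_of_nonneg_right hg ha0
  have hdecomp : ⟪g, prev - z⟫ = ⟪g, prev - cur⟫ + ⟪cur - z, g⟫ := by
    simp only [inner_sub_left, inner_sub_right]
    linarith [real_inner_comm cur g, real_inner_comm z g]
  have hamgm : R * a ≤ ρ * R ^ 2 / 2 + c * ((1/2) * a ^ 2) := by
    have h1 : (0:ℝ) ≤ (a - ρ * R)^2 / (2 * ρ) := by positivity
    have h2 : a^2/(2*ρ) + ρ*R^2/2 - R*a = (a - ρ*R)^2/(2*ρ) := by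
      field_simp
      ring
    have h3' : c * ((1/2) * a^2) = a^2/(2*ρ) := by rw [hc]; ring
    linarith
  have hDcp : c * ((1/2) * a^2) ≤ c * Dbreg h h' cur prev :=
    mul_le_mul_of_nonneg_left (by simpa [ha] using hsl) hc0.le
  have egoal : c * (Dbreg h h' z prev - Dbreg h h' z cur)
      = c * Dbreg h h' z prev - c * Dbreg h h' z cur := by ring
  rw [hdecomp]
  linarith [hcs, hfo4, hamgm, hDcp, egoal]

lemma sum_one_div_sqrt (T : ℕ) :
    ∑ u ∈ range T, 1 / Real.sqrt ((u:ℝ) + 1) ≤ 2 * Real.sqrt (T:ℝ) := by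
  induction T with
  | zero => simp
  | succ T ih =>
    rw [Finset.sum_range_succ]
    have hs1 : (0:ℝ) ≤ Real.sqrt (T:ℝ) := Real.sqrt_nonneg _
    have hs2 : 0 < Real.sqrt ((T:ℝ) + 1) := Real.sqrt_pos.mpr (by positivity)
    have hsq1 : Real.sqrt (T:ℝ) ^ 2 = (T:ℝ) := Real.sq_sqrt (by positivity)
    have hsq2 : Real.sqrt ((T:ℝ) + 1) ^ 2 = (T:ℝ) + 1 := Real.sq_sqrt (by positivity)
    have key : 1 / Real.sqrt ((T:ℝ) + 1) ≤ 2 * Real.sqrt ((T:ℝ) + 1) - 2 * Real.sqrt (T:ℝ) := by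
      rw [div_le_iff₀ hs2]
      nlinarith [sq_nonneg (Real.sqrt ((T:ℝ)+1) - Real.sqrt (T:ℝ)), hsq1, hsq2]
    push_cast
    linarith [ih]

lemma abel_bound (δ R : ℝ) (hδ0 : 0 < δ) (hR0 : 0 < R) (c : ℕ → ℝ)
    (hc0 : ∀ u, 0 ≤ c u) (hcδ : ∀ u, c u ≤ δ ^ 2) :
    ∀ T : ℕ, ∑ u ∈ range T, R * Real.sqrt ((u:ℝ) + 1) / δ * (c u - c (u + 1)) ≤
      (δ - c T / δ) * (R * Real.sqrt (T:ℝ)) := by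
  intro T
  induction T with
  | zero => simp
  | succ T ih =>
    rw [Finset.sum_range_succ]
    have hs1 : (0:ℝ) ≤ Real.sqrt (T:ℝ) := Real.sqrt_nonneg _
    have hmono : Real.sqrt (T:ℝ) ≤ Real.sqrt ((T:ℝ) + 1) :=
      Real.sqrt_le_sqrt (by linarith)
    have hkey : (δ - c T / δ) * (R * Real.sqrt (T:ℝ))
        + R * Real.sqrt ((T:ℝ) + 1) / δ * (c T - c (T + 1))
        ≤ (δ - c (T + 1) / δ) * (R * Real.sqrt ((T:ℝ) + 1)) := by
      have hfac : (δ - c (T + 1) / δ) * (R * Real.sqrt ((T:ℝ) + 1))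
          - ((δ - c T / δ) * (R * Real.sqrt (T:ℝ))
            + R * Real.sqrt ((T:ℝ) + 1) / δ * (c T - c (T + 1)))
          = (δ ^ 2 - c T) / δ * R * (Real.sqrt ((T:ℝ) + 1) - Real.sqrt (T:ℝ)) := by
        field_simp
        ring
      have h1 : 0 ≤ (δ ^ 2 - c T) / δ * R * (Real.sqrt ((T:ℝ) + 1) - Real.sqrt (T:ℝ)) := by
        apply mul_nonneg
        · apply mul_nonneg (div_nonneg (by linarith [hcδ T]) hδ0.le) hR0.le
        · linarith
      linarith
    push_cast
    linarith [ih]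

/-- Primal-dual convergence of averaged mirror descent iterates over a compact set, for
step sizes `ρ t = δ/(R√t)`: the duality gap is at most `2Rδ/√t`. -/
theorem mirror_descent_averaged_gap_sqrt {p n : ℕ}
    (A : EuclideanSpace ℝ (Fin p) →L[ℝ] EuclideanSpace ℝ (Fin n))
    (f : EuclideanSpace ℝ (Fin n) → ℝ)
    (hf : ConvexOn ℝ Set.univ f)
    (K : Set (EuclideanSpace ℝ (Fin p)))
    (hKcpt : IsCompact K) (hKconv : Convex ℝ K)
    (h : EuclideanSpace ℝ (Fin p) → ℝ)
    (h' : EuclideanSpace ℝ (Fin p) → EuclideanSpace ℝ (Fin p))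
    (hdiff : ∀ x, HasGradientAt h (h' x) x)
    (hsc : StrongConvexOn Set.univ 1 h)
    (x : ℕ → EuclideanSpace ℝ (Fin p))
    (y : ℕ → EuclideanSpace ℝ (Fin n))
    (ρ : ℕ → ℝ)
    (hxK : ∀ t, x t ∈ K)
    (hsub : ∀ t, IsSubgrad f (A (x t)) (y t))
    (hmin : ∀ t, 1 ≤ t → ∀ x' ∈ K,
      1 / ρ t * Dbreg h h' (x t) (x (t - 1)) +
          ⟪x t - x (t - 1), (ContinuousLinearMap.adjoint A) (y (t - 1))⟫ ≤
        1 / ρ t * Dbreg h h' x' (x (t - 1)) +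
          ⟪x' - x (t - 1), (ContinuousLinearMap.adjoint A) (y (t - 1))⟫)
    (δ : ℝ)
    (hD : ∀ x₁ ∈ K, ∀ x₂ ∈ K, Dbreg h h' x₁ x₂ ≤ δ ^ 2)
    (R : ℝ)
    (hR : ∀ z y', IsSubgrad f z y' → ‖(ContinuousLinearMap.adjoint A) y'‖ ≤ R)
    (σ : EuclideanSpace ℝ (Fin p) → ℝ)
    (hσ : ∀ z, IsGreatest ((fun x' => ⟪z, x'⟫) '' K) (σ z))
    (hδ0 : 0 < δ) (hR0 : 0 < R)
    (hρ : ∀ t, 1 ≤ t → ρ t = δ / (R * Real.sqrt (t : ℝ))) :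
    ∀ t : ℕ, 1 ≤ t →
      ((f (A ((1 / (t : ℝ)) • ∑ u ∈ range t, x u)) +
          σ (-((ContinuousLinearMap.adjoint A) ((1 / (t : ℝ)) • ∑ u ∈ range t, y u))) : ℝ)
          : EReal) +
        fstarE f ((1 / (t : ℝ)) • ∑ u ∈ range t, y u) ≤
      ((2 * R * δ / Real.sqrt (t : ℝ) : ℝ) : EReal) := by
  intro T hT
  set Aad := ContinuousLinearMap.adjoint A with hAad
  set g : ℕ → EuclideanSpace ℝ (Fin p) := fun u => Aad (y u) with hgdef
  have hT0 : (0:ℝ) < (T:ℝ) := by exact_mod_cast hT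
  have hsT : (0:ℝ) < Real.sqrt (T:ℝ) := Real.sqrt_pos.mpr hT0
  set yb := (1 / (T:ℝ)) • ∑ u ∈ range T, y u with hyb
  set xb := (1 / (T:ℝ)) • ∑ u ∈ range T, x u with hxb
  set z₀ := -(Aad yb) with hz₀
  obtain ⟨xs, hxsK, hxs⟩ := (hσ z₀).1
  -- regret bound
  have hc0 : ∀ u, 0 ≤ Dbreg h h' xs (x u) := by
    intro u
    have := strong_lower h h' hdiff hsc xs (x u)
    have h2 : (0:ℝ) ≤ (1/2) * ‖xs - x u‖^2 := by positivity
    simp only [Dbreg]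
    linarith
  have hcδ : ∀ u, Dbreg h h' xs (x u) ≤ δ ^ 2 := fun u => hD xs hxsK (x u) (hxK u)
  have hstep : ∀ u : ℕ, ⟪g u, x u - xs⟫ ≤
      δ / (R * Real.sqrt ((u:ℝ) + 1)) * R ^ 2 / 2 +
        R * Real.sqrt ((u:ℝ) + 1) / δ *
          (Dbreg h h' xs (x u) - Dbreg h h' xs (x (u + 1))) := by
    intro u
    have hsu : (0:ℝ) < Real.sqrt ((u:ℝ) + 1) := Real.sqrt_pos.mpr (by positivity)
    have hρu : ρ (u + 1) = δ / (R * Real.sqrt ((u:ℝ) + 1)) := by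
      have := hρ (u + 1) (by omega)
      rwa [Nat.cast_add, Nat.cast_one] at this
    have hρupos : 0 < ρ (u + 1) := by rw [hρu]; positivity
    have hminu := hmin (u + 1) (by omega)
    simp only [Nat.add_sub_cancel] at hminu
    have hb := step_bound h h' hdiff hsc hKconv (ρ (u + 1)) R hρupos (x u) (x (u + 1))
      (hxK (u + 1)) (g u) (hR (A (x u)) (y u) (hsub u)) hminu xs hxsK
    have hinv : 1 / ρ (u + 1) = R * Real.sqrt ((u:ℝ) + 1) / δ := by
      rw [hρu, one_div_div]
    rw [hinv, hρu] at hb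
    exact hb
  have hregret : ∑ u ∈ range T, ⟪g u, x u - xs⟫ ≤ 2 * R * δ * Real.sqrt (T:ℝ) := by
    have hsum := Finset.sum_le_sum (fun u (_ : u ∈ range T) => hstep u)
    rw [Finset.sum_add_distrib] at hsum
    have hpart1 : ∑ u ∈ range T, δ / (R * Real.sqrt ((u:ℝ) + 1)) * R ^ 2 / 2
        ≤ R * δ * Real.sqrt (T:ℝ) := by
      have heq : ∀ u : ℕ, δ / (R * Real.sqrt ((u:ℝ) + 1)) * R ^ 2 / 2
          = (R * δ / 2) * (1 / Real.sqrt ((u:ℝ) + 1)) := by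
        intro u
        have hsu : (0:ℝ) < Real.sqrt ((u:ℝ) + 1) := Real.sqrt_pos.mpr (by positivity)
        field_simp
      rw [Finset.sum_congr rfl (fun u _ => heq u), ← Finset.mul_sum]
      have := sum_one_div_sqrt T
      calc (R * δ / 2) * ∑ u ∈ range T, 1 / Real.sqrt ((u:ℝ) + 1)
          ≤ (R * δ / 2) * (2 * Real.sqrt (T:ℝ)) :=
            mul_le_mul_of_nonneg_left this (by positivity)
        _ = R * δ * Real.sqrt (T:ℝ) := by ring
    have hpart2 : ∑ u ∈ range T,
        R * Real.sqrt ((u:ℝ) + 1) / δ *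
          (Dbreg h h' xs (x u) - Dbreg h h' xs (x (u + 1)))
        ≤ δ * (R * Real.sqrt (T:ℝ)) := by
      have := abel_bound δ R hδ0 hR0 (fun u => Dbreg h h' xs (x u)) hc0 hcδ T
      have h2 : (δ - Dbreg h h' xs (x T) / δ) * (R * Real.sqrt (T:ℝ))
          ≤ δ * (R * Real.sqrt (T:ℝ)) := by
        apply mul_le_mul_of_nonneg_right _ (by positivity)
        have := hc0 T
        have hd : 0 ≤ Dbreg h h' xs (x T) / δ := div_nonneg this hδ0.le
        linarith
      exact le_trans this h2
    calc ∑ u ∈ range T, ⟪g u, x u - xs⟫ ≤ _ := hsum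
      _ ≤ R * δ * Real.sqrt (T:ℝ) + δ * (R * Real.sqrt (T:ℝ)) := add_le_add hpart1 hpart2
      _ = 2 * R * δ * Real.sqrt (T:ℝ) := by ring
  -- Jensen for f
  have hAxb : A xb = ∑ u ∈ range T, (1 / (T:ℝ)) • A (x u) := by
    rw [hxb, map_smul, map_sum, Finset.smul_sum]
  have hwsum : ∑ _u ∈ range T, (1 / (T:ℝ)) = 1 := by
    rw [Finset.sum_const, Finset.card_range, nsmul_eq_mul]
    field_simp
  have hjensen : f (A xb) ≤ ∑ u ∈ range T, (1 / (T:ℝ)) * f (A (x u)) := by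
    rw [hAxb]
    exact hf.map_sum_le (fun _ _ => by positivity) hwsum (fun _ _ => Set.mem_univ _)
  -- sigma term
  have hAadyb : Aad yb = (1 / (T:ℝ)) • ∑ u ∈ range T, g u := by
    rw [hyb, map_smul, map_sum]
  have hsigma : σ z₀ = -((1 / (T:ℝ)) * ∑ u ∈ range T, ⟪g u, xs⟫) := by
    rw [← hxs]
    show ⟪z₀, xs⟫ = _
    rw [hz₀, hAadyb, inner_neg_left, real_inner_smul_left, sum_inner]
  -- fstar term
  have hfstar : fstarE f yb ≤
      (((1 / (T:ℝ)) * ∑ u ∈ range T, (⟪g u, x u⟫ - f (A (x u))) : ℝ) : EReal) := by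
    apply iSup_le
    intro z
    rw [EReal.coe_le_coe_iff]
    have hybz : ⟪yb, z⟫ = (1 / (T:ℝ)) * ∑ u ∈ range T, ⟪y u, z⟫ := by
      rw [hyb, real_inner_smul_left, sum_inner]
    have hfz : f z = (1 / (T:ℝ)) * ∑ _u ∈ range T, f z := by
      rw [Finset.sum_const, Finset.card_range, nsmul_eq_mul]
      field_simp
    have hperu : ∀ u : ℕ, ⟪y u, z⟫ - f z ≤ ⟪g u, x u⟫ - f (A (x u)) := by
      intro u
      have := hsub u z
      rw [inner_sub_right] at this
      have hadj : (⟪g u, x u⟫ : ℝ) = ⟪y u, A (x u)⟫ := by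
        rw [hgdef]
        exact ContinuousLinearMap.adjoint_inner_left A (x u) (y u)
      linarith
    calc ⟪yb, z⟫ - f z = (1 / (T:ℝ)) * ∑ u ∈ range T, (⟪y u, z⟫ - f z) := by
          rw [Finset.sum_sub_distrib, mul_sub, ← hybz]
          rw [Finset.sum_const, Finset.card_range, nsmul_eq_mul]
          have : (1 / (T:ℝ)) * ((T:ℝ) * f z) = f z := by field_simp
          rw [this]
      _ ≤ (1 / (T:ℝ)) * ∑ u ∈ range T, (⟪g u, x u⟫ - f (A (x u))) := by
          apply mul_le_mul_of_nonneg_left _ (by positivity)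
          exact Finset.sum_le_sum (fun u _ => hperu u)
  -- combine
  have hmainreal : f (A xb) + σ z₀ +
      ((1 / (T:ℝ)) * ∑ u ∈ range T, (⟪g u, x u⟫ - f (A (x u))))
      ≤ 2 * R * δ / Real.sqrt (T:ℝ) := by
    have hexp : f (A xb) + σ z₀ +
        ((1 / (T:ℝ)) * ∑ u ∈ range T, (⟪g u, x u⟫ - f (A (x u))))
        ≤ (1 / (T:ℝ)) * ∑ u ∈ range T, ⟪g u, x u - xs⟫ := by
      have e1 : ∑ u ∈ range T, ⟪g u, x u - xs⟫
          = ∑ u ∈ range T, (⟪g u, x u⟫ - f (A (x u)))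
            + ∑ u ∈ range T, f (A (x u)) - ∑ u ∈ range T, ⟪g u, xs⟫ := by
        have hsp : ∀ u : ℕ, (⟪g u, x u - xs⟫:ℝ) = ⟪g u, x u⟫ - ⟪g u, xs⟫ :=
          fun u => inner_sub_right _ _ _
        rw [Finset.sum_congr rfl (fun u _ => hsp u), Finset.sum_sub_distrib,
          Finset.sum_sub_distrib]
        ring
      rw [e1, hsigma]
      have hj2 : f (A xb) ≤ (1 / (T:ℝ)) * ∑ u ∈ range T, f (A (x u)) := by
        rw [Finset.mul_sum]
        exact hjensen
      have hrw : (1 / (T:ℝ)) * (∑ u ∈ range T, (⟪g u, x u⟫ - f (A (x u)))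
            + ∑ u ∈ range T, f (A (x u)) - ∑ u ∈ range T, ⟪g u, xs⟫)
          = (1 / (T:ℝ)) * ∑ u ∈ range T, (⟪g u, x u⟫ - f (A (x u)))
            + (1 / (T:ℝ)) * ∑ u ∈ range T, f (A (x u))
            - (1 / (T:ℝ)) * ∑ u ∈ range T, ⟪g u, xs⟫ := by ring
      rw [hrw]
      linarith
    have hfin : (1 / (T:ℝ)) * ∑ u ∈ range T, ⟪g u, x u - xs⟫
        ≤ 2 * R * δ / Real.sqrt (T:ℝ) := by
      have hTs : Real.sqrt (T:ℝ) * Real.sqrt (T:ℝ) = (T:ℝ) :=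
        Real.mul_self_sqrt hT0.le
      have : (1 / (T:ℝ)) * (2 * R * δ * Real.sqrt (T:ℝ))
          = 2 * R * δ / Real.sqrt (T:ℝ) := by
        rw [eq_div_iff (ne_of_gt hsT)]
        field_simp
        linear_combination hTs
      calc (1 / (T:ℝ)) * ∑ u ∈ range T, ⟪g u, x u - xs⟫
          ≤ (1 / (T:ℝ)) * (2 * R * δ * Real.sqrt (T:ℝ)) :=
            mul_le_mul_of_nonneg_left hregret (by positivity)
        _ = 2 * R * δ / Real.sqrt (T:ℝ) := this
    linarith
  calc ((f (A xb) + σ z₀ : ℝ) : EReal) + fstarE f yb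
      ≤ ((f (A xb) + σ z₀ : ℝ) : EReal) +
        (((1 / (T:ℝ)) * ∑ u ∈ range T, (⟪g u, x u⟫ - f (A (x u))) : ℝ) : EReal) :=
        add_le_add_right hfstar _
    _ = ((f (A xb) + σ z₀ +
        (1 / (T:ℝ)) * ∑ u ∈ range T, (⟪g u, x u⟫ - f (A (x u))) : ℝ) : EReal) := by
        rw [← EReal.coe_add]
    _ ≤ ((2 * R * δ / Real.sqrt (T:ℝ) : ℝ) : EReal) := EReal.coe_le_coe_iff.mpr hmainreal
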